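/- Let β > 0, 0 < c < 1, γ > 0, and x real. For |t| < 1, the generating function with modified coefficients Σ_{n=0}^∞ [γ/(n+γ)] M_n(x; β, c) (ct)^n/n! = Σ_{m=0}^∞ Σ_{j=0}^∞ [(γ)_{m+j} (x+β)_m (−x)_j / ((γ+1)_{m+j} m! j!)] (ct)^m t^j holds (both sides converging absolutely for |t| < min(1, 1/c)), where M_n(x;β,c) = (β)_n Σ_{k=0}^n [(−n)_k (−x)_k/((β)_k k!)](1−1/c)^k, and the right-hand side is the Appell F₁ function F₁[γ; x+β, −x; γ+1; ct, t]. -/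

import Mathlib

/-- Pochhammer symbol (rising factorial) of a real number. -/
noncomputable def poch (a : ℝ) (k : ℕ) : ℝ := ∏ i ∈ Finset.range k, (a + i)

/-- Meixner polynomials \(M_n(x;\beta,c)\). -/
noncomputable def meixner (β c x : ℝ) (n : ℕ) : ℝ :=
  poch β n * ∑ k ∈ Finset.range (n + 1),
    poch (-(n : ℝ)) k * poch (-x) k / (poch β k * (Nat.factorial k)) * (1 - 1 / c) ^ k


noncomputable def pochd (a : ℝ) (k : ℕ) : ℝ := ∏ i ∈ Finset.range k, (a - i)

lemma poch_zero (a : ℝ) : poch a 0 = 1 := rfl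

lemma poch_succ (a : ℝ) (k : ℕ) : poch a (k + 1) = poch a k * (a + k) :=
  Finset.prod_range_succ _ _

lemma pochd_succ (a : ℝ) (k : ℕ) : pochd a (k + 1) = pochd a k * (a - k) :=
  Finset.prod_range_succ _ _

lemma poch_succ' (a : ℝ) (k : ℕ) : poch a (k + 1) = a * poch (a + 1) k := by
  rw [poch, Finset.prod_range_succ']
  simp only [Nat.cast_zero, add_zero, poch]
  rw [mul_comm]
  congr 1
  exact Finset.prod_congr rfl fun i _ => by push_cast; ring

lemma poch_add (a : ℝ) (m n : ℕ) : poch a (m + n) = poch a m * poch (a + m) n := by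
  rw [poch, Finset.prod_range_add]
  congr 1
  exact Finset.prod_congr rfl fun i _ => by push_cast; ring

lemma poch_pos {a : ℝ} (ha : 0 < a) (k : ℕ) : 0 < poch a k :=
  Finset.prod_pos fun i _ => by positivity

lemma neg_one_pow_mul_poch (a : ℝ) (k : ℕ) : (-1) ^ k * poch a k = pochd (-a) k := by
  induction k with
  | zero => simp [poch_zero, pochd]
  | succ k ih => rw [poch_succ, pochd_succ, ← ih]; ring

lemma pochd_natCast (n : ℕ) (k : ℕ) : pochd (n : ℝ) k = (n.descFactorial k : ℝ) := by
  induction k with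
  | zero => simp [pochd]
  | succ k ih =>
    rw [pochd_succ, ih, Nat.descFactorial_succ]
    rcases le_or_gt k n with h | h
    · push_cast [h]; ring
    · rw [Nat.descFactorial_eq_zero_iff_lt.2 h]; simp

lemma poch_eq_pochd (a : ℝ) (n : ℕ) : poch a n = pochd (a + n - 1) n := by
  rw [poch, ← Finset.prod_range_reflect]
  refine Finset.prod_congr rfl fun j hj => ?_
  rw [Finset.mem_range] at hj
  have h1 : ((n - 1 - j : ℕ) : ℝ) = (n : ℝ) - 1 - j := by
    have h2 : 1 + j ≤ n := by omega
    rw [Nat.sub_sub, Nat.cast_sub h2]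
    push_cast; ring
  rw [h1]; ring


lemma pochd_zero (a : ℝ) : pochd a 0 = 1 := rfl

lemma pochd_vandermonde (x y : ℝ) (m : ℕ) : pochd (x + y) m
    = ∑ i ∈ Finset.range (m + 1), (m.choose i : ℝ) * pochd x i * pochd y (m - i) := by
  induction m with
  | zero => simp [pochd]
  | succ m ih =>
    rw [pochd_succ, ih, Finset.sum_mul]
    have key : ∀ i ∈ Finset.range (m + 1),
        (m.choose i : ℝ) * pochd x i * pochd y (m - i) * (x + y - m)
          = (m.choose i : ℝ) * pochd x (i + 1) * pochd y (m - i)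
            + (m.choose i : ℝ) * pochd x i * pochd y (m - i + 1) := by
      intro i hi
      rw [Finset.mem_range] at hi
      have hcast : ((m - i : ℕ) : ℝ) = (m : ℝ) - i := Nat.cast_sub (by omega)
      rw [pochd_succ x i, pochd_succ y (m - i), hcast]
      push_cast
      ring
    rw [Finset.sum_congr rfl key, Finset.sum_add_distrib]
    rw [Finset.sum_range_succ'
      (fun i => (((m + 1).choose i : ℕ) : ℝ) * pochd x i * pochd y (m + 1 - i)) (m + 1)]
    have step1 : ∀ i ∈ Finset.range (m + 1),
        (((m + 1).choose (i + 1) : ℕ) : ℝ) * pochd x (i + 1) * pochd y (m + 1 - (i + 1))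
          = (m.choose i : ℝ) * pochd x (i + 1) * pochd y (m - i)
            + (m.choose (i + 1) : ℝ) * pochd x (i + 1) * pochd y (m - i) := by
      intro i hi
      have h1 : m + 1 - (i + 1) = m - i := by omega
      rw [h1, Nat.choose_succ_succ]
      push_cast
      ring
    rw [Finset.sum_congr rfl step1, Finset.sum_add_distrib]
    have step2 : ∑ i ∈ Finset.range (m + 1),
        (m.choose i : ℝ) * pochd x i * pochd y (m - i + 1)
        = pochd y (m + 1)
          + ∑ i ∈ Finset.range (m + 1), (m.choose (i + 1) : ℝ) * pochd x (i + 1) * pochd y (m - i) := by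
      rw [Finset.sum_range_succ'
        (fun i => (m.choose i : ℝ) * pochd x i * pochd y (m - i + 1)) m]
      rw [Finset.sum_range_succ
        (fun i => (m.choose (i + 1) : ℝ) * pochd x (i + 1) * pochd y (m - i)) m]
      have e1 : ∀ i ∈ Finset.range m,
          (m.choose (i + 1) : ℝ) * pochd x (i + 1) * pochd y (m - (i + 1) + 1)
            = (m.choose (i + 1) : ℝ) * pochd x (i + 1) * pochd y (m - i) := by
        intro i hi
        rw [Finset.mem_range] at hi
        congr 2
        omega
      rw [Finset.sum_congr rfl e1]
      simp [pochd_zero, Nat.choose_succ_self]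
      ring
    rw [step2]
    simp [pochd_zero]
    ring

lemma chu (a b : ℝ) (m : ℕ) :
    ∑ i ∈ Finset.range (m + 1),
      (-1 : ℝ) ^ i * (m.choose i : ℝ) * poch a i * poch (b + i) (m - i)
    = poch (b - a) m := by
  rw [poch_eq_pochd]
  have h : b - a + m - 1 = (-a) + (b + m - 1) := by ring
  rw [h, pochd_vandermonde]
  refine Finset.sum_congr rfl fun i hi => ?_
  rw [Finset.mem_range] at hi
  rw [← neg_one_pow_mul_poch a i, poch_eq_pochd (b + i) (m - i)]
  have hcast : ((m - i : ℕ) : ℝ) = (m : ℝ) - i := Nat.cast_sub (by omega)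
  have h2 : b + i + ((m - i : ℕ) : ℝ) - 1 = b + m - 1 := by rw [hcast]; ring
  rw [h2]
  ring

lemma neg_one_sq_pow (j : ℕ) : ((-1 : ℝ) ^ j) * ((-1 : ℝ) ^ j) = 1 := by
  rw [← pow_add]
  exact Even.neg_one_pow ⟨j, rfl⟩

lemma poch_neg_natCast (n j : ℕ) : poch (-(n : ℝ)) j = (-1) ^ j * (n.descFactorial j : ℝ) := by
  have h := neg_one_pow_mul_poch (-(n : ℝ)) j
  rw [neg_neg, pochd_natCast] at h
  calc poch (-(n : ℝ)) j = ((-1 : ℝ) ^ j * (-1 : ℝ) ^ j) * poch (-(n : ℝ)) j := by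
        rw [neg_one_sq_pow, one_mul]
    _ = (-1) ^ j * (n.descFactorial j : ℝ) := by rw [mul_assoc, h]

lemma poch_neg_mul_neg_pow (n j : ℕ) (u : ℝ) :
    poch (-(n : ℝ)) j * (-u) ^ j = (n.descFactorial j : ℝ) * u ^ j := by
  rw [poch_neg_natCast, neg_pow u j]
  calc (-1 : ℝ) ^ j * (n.descFactorial j : ℝ) * ((-1) ^ j * u ^ j)
      = ((-1 : ℝ) ^ j * (-1 : ℝ) ^ j) * ((n.descFactorial j : ℝ) * u ^ j) := by ring
    _ = (n.descFactorial j : ℝ) * u ^ j := by rw [neg_one_sq_pow, one_mul]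

lemma poch_ne_zero {a : ℝ} (ha : 0 < a) (k : ℕ) : poch a k ≠ 0 := (poch_pos ha k).ne'

lemma term_eq (β x u : ℝ) (hβ : 0 < β) {n j i : ℕ} (hj : j ≤ n) (hi : i ≤ n - j) :
    poch β n * (poch (-(n : ℝ)) (j + i) * poch (-x) (j + i) /
        (poch β (j + i) * ((j + i).factorial : ℝ)) * ((-u) ^ j * ((j + i).choose j : ℝ)))
    = ((n.choose j : ℝ) * poch (-x) j * u ^ j)
        * ((-1 : ℝ) ^ i * ((n - j).choose i : ℝ) * poch ((j : ℝ) - x) i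
            * poch ((β + j) + i) ((n - j) - i)) := by
  have hβsplit : poch β n = poch β (j + i) * poch ((β + j) + i) ((n - j) - i) := by
    have h1 : (j + i) + ((n - j) - i) = n := by omega
    calc poch β n = poch β ((j + i) + ((n - j) - i)) := by rw [h1]
      _ = poch β (j + i) * poch ((β + j) + i) ((n - j) - i) := by
          rw [poch_add]; congr 1; push_cast; ring
  have hn1 : poch (-(n : ℝ)) (j + i) = poch (-(n : ℝ)) j * poch (-((n - j : ℕ) : ℝ)) i := by
    rw [poch_add]
    congr 1
    rw [Nat.cast_sub hj]
    ring
  have hx1 : poch (-x) (j + i) = poch (-x) j * poch ((j : ℝ) - x) i := by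
    rw [poch_add]
    congr 1
    ring
  have hd1 : ((n.descFactorial j : ℕ) : ℝ) = (j.factorial : ℝ) * (n.choose j : ℝ) := by
    rw [Nat.descFactorial_eq_factorial_mul_choose]; push_cast; ring
  have hd2 : (((n - j).descFactorial i : ℕ) : ℝ)
      = (i.factorial : ℝ) * ((n - j).choose i : ℝ) := by
    rw [Nat.descFactorial_eq_factorial_mul_choose]; push_cast; ring
  have hc : (((j + i).factorial : ℕ) : ℝ)
      = ((j + i).choose j : ℝ) * (j.factorial : ℝ) * (i.factorial : ℝ) := by
    have h := Nat.choose_mul_factorial_mul_factorial (show j ≤ j + i by omega)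
    rw [Nat.add_sub_cancel_left] at h
    rw [← h]; push_cast; ring
  have haux : poch (-(n : ℝ)) (j + i) * (-u) ^ j
      = (n.descFactorial j : ℝ) * u ^ j * ((-1 : ℝ) ^ i * ((n - j).descFactorial i : ℝ)) := by
    rw [hn1, poch_neg_natCast (n - j) i]
    calc poch (-(n : ℝ)) j * ((-1 : ℝ) ^ i * ((n - j).descFactorial i : ℝ)) * (-u) ^ j
        = (poch (-(n : ℝ)) j * (-u) ^ j) * ((-1 : ℝ) ^ i * ((n - j).descFactorial i : ℝ)) := by
          ring
      _ = _ := by rw [poch_neg_mul_neg_pow n j u]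
  have hne1 : poch β (j + i) ≠ 0 := poch_ne_zero hβ _
  have hne2 : ((j + i).choose j : ℝ) ≠ 0 :=
    Nat.cast_ne_zero.2 (Nat.choose_pos (show j ≤ j + i by omega)).ne'
  have hne3 : (j.factorial : ℝ) ≠ 0 := by exact_mod_cast j.factorial_ne_zero
  have hne4 : (i.factorial : ℝ) ≠ 0 := by exact_mod_cast i.factorial_ne_zero
  calc poch β n * (poch (-(n : ℝ)) (j + i) * poch (-x) (j + i) /
        (poch β (j + i) * ((j + i).factorial : ℝ)) * ((-u) ^ j * ((j + i).choose j : ℝ)))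
      = (poch (-(n : ℝ)) (j + i) * (-u) ^ j) * (poch β n * poch (-x) (j + i) *
          ((j + i).choose j : ℝ) / (poch β (j + i) * ((j + i).factorial : ℝ))) := by ring
    _ = _ := by
        rw [haux, hβsplit, hx1, hc, hd1, hd2]
        field_simp

lemma meixner_sum_eq (β x u : ℝ) (hβ : 0 < β) (n : ℕ) :
    poch β n * ∑ k ∈ Finset.range (n + 1),
      poch (-(n : ℝ)) k * poch (-x) k / (poch β k * (Nat.factorial k)) * (1 - u) ^ k
    = ∑ j ∈ Finset.range (n + 1),
        (n.choose j : ℝ) * poch (-x) j * poch (x + β) (n - j) * u ^ j := by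
  have hpow : ∀ k : ℕ, (1 - u) ^ k
      = ∑ j ∈ Finset.range (k + 1), (-u) ^ j * (k.choose j : ℝ) := by
    intro k
    rw [sub_eq_add_neg, add_comm]
    rw [add_pow]
    exact Finset.sum_congr rfl fun j _ => by rw [one_pow]; ring
  calc poch β n * ∑ k ∈ Finset.range (n + 1),
        poch (-(n : ℝ)) k * poch (-x) k / (poch β k * (Nat.factorial k)) * (1 - u) ^ k
      = ∑ k ∈ Finset.range (n + 1), ∑ j ∈ Finset.range (k + 1),
          poch β n * (poch (-(n : ℝ)) k * poch (-x) k / (poch β k * (Nat.factorial k))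
            * ((-u) ^ j * (k.choose j : ℝ))) := by
        rw [Finset.mul_sum]
        refine Finset.sum_congr rfl fun k _ => ?_
        rw [hpow k, Finset.mul_sum, Finset.mul_sum]
    _ = ∑ j ∈ Finset.range (n + 1), ∑ k ∈ Finset.Ico j (n + 1),
          poch β n * (poch (-(n : ℝ)) k * poch (-x) k / (poch β k * (Nat.factorial k))
            * ((-u) ^ j * (k.choose j : ℝ))) := by
        simp only [Finset.range_eq_Ico]
        rw [← Finset.sum_Ico_Ico_comm 0 (n + 1)]
    _ = ∑ j ∈ Finset.range (n + 1),
          (n.choose j : ℝ) * poch (-x) j * poch (x + β) (n - j) * u ^ j := by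
        refine Finset.sum_congr rfl fun j hj => ?_
        rw [Finset.mem_range] at hj
        have hj' : j ≤ n := by omega
        rw [Finset.sum_Ico_eq_sum_range]
        have hlen : n + 1 - j = (n - j) + 1 := by omega
        rw [hlen]
        have hterm : ∀ i ∈ Finset.range ((n - j) + 1),
            poch β n * (poch (-(n : ℝ)) (j + i) * poch (-x) (j + i) /
              (poch β (j + i) * (Nat.factorial (j + i))) * ((-u) ^ j * ((j + i).choose j : ℝ)))
            = ((n.choose j : ℝ) * poch (-x) j * u ^ j)
                * ((-1 : ℝ) ^ i * ((n - j).choose i : ℝ) * poch ((j : ℝ) - x) i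
                    * poch ((β + j) + i) ((n - j) - i)) := by
          intro i hi
          rw [Finset.mem_range] at hi
          exact term_eq β x u hβ hj' (by omega)
        rw [Finset.sum_congr rfl hterm, ← Finset.mul_sum]
        rw [chu ((j : ℝ) - x) (β + j) (n - j)]
        have : β + (j : ℝ) - ((j : ℝ) - x) = x + β := by ring
        rw [this]
        ring

lemma poch_ratio (γ : ℝ) (n : ℕ) : poch γ n * ((n : ℝ) + γ) = γ * poch (γ + 1) n := by
  have h1 := poch_succ γ n
  have h2 := poch_succ' γ n
  rw [h1] at h2
  linear_combination h2

lemma diag_eq (β c γ x t : ℝ) (hβ : 0 < β) (hc0 : 0 < c) (hγ : 0 < γ) (n : ℕ) :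
    ∑ p ∈ Finset.HasAntidiagonal.antidiagonal n,
      (poch γ (p.1 + p.2) * poch (x + β) p.1 * poch (-x) p.2 /
        (poch (γ + 1) (p.1 + p.2) * (Nat.factorial p.1) * (Nat.factorial p.2)) *
        (c * t) ^ p.1 * t ^ p.2)
    = γ / ((n : ℝ) + γ) * meixner β c x n * (c * t) ^ n / (Nat.factorial n) := by
  rw [Finset.Nat.sum_antidiagonal_eq_sum_range_succ_mk]
  have hm : meixner β c x n = ∑ j ∈ Finset.range (n + 1),
      (n.choose j : ℝ) * poch (-x) j * poch (x + β) (n - j) * (1 / c) ^ j :=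
    meixner_sum_eq β x (1 / c) hβ n
  rw [hm, ← Finset.sum_range_reflect
    (fun j => (n.choose j : ℝ) * poch (-x) j * poch (x + β) (n - j) * (1 / c) ^ j) (n + 1)]
  rw [Finset.mul_sum, Finset.sum_mul, Finset.sum_div]
  refine Finset.sum_congr rfl fun k hk => ?_
  rw [Finset.mem_range] at hk
  have hk' : k ≤ n := by omega
  have e1 : n + 1 - 1 - k = n - k := by omega
  rw [e1]
  have e2 : k + (n - k) = n := by omega
  rw [e2]
  have e3 : n - (n - k) = k := by omega
  rw [e3]
  have e4 : n.choose (n - k) = n.choose k := Nat.choose_symm hk'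
  rw [e4]
  have hγn : ((n : ℝ) + γ) ≠ 0 := by positivity
  have hpg : poch (γ + 1) n ≠ 0 := poch_ne_zero (by linarith) n
  have h1 : poch γ n = γ * poch (γ + 1) n / ((n : ℝ) + γ) := by
    field_simp
    linear_combination poch_ratio γ n
  rw [h1]
  have h2 : ((n.choose k : ℕ) : ℝ)
      = (n.factorial : ℝ) / ((k.factorial : ℝ) * ((n - k).factorial : ℝ)) := by
    have h := Nat.choose_mul_factorial_mul_factorial hk'
    have hne : ((k.factorial : ℝ) * ((n - k).factorial : ℝ)) ≠ 0 := by
      have := k.factorial_ne_zero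
      have := (n - k).factorial_ne_zero
      positivity
    field_simp
    exact_mod_cast h
  rw [h2]
  have h3 : (c * t) ^ n = (c * t) ^ k * (c * t) ^ (n - k) := by
    rw [← pow_add, e2]
  rw [h3]
  have hkf : (k.factorial : ℝ) ≠ 0 := by exact_mod_cast k.factorial_ne_zero
  have hnkf : ((n - k).factorial : ℝ) ≠ 0 := by exact_mod_cast (n - k).factorial_ne_zero
  have hnf : (n.factorial : ℝ) ≠ 0 := by exact_mod_cast n.factorial_ne_zero
  have hcne : c ≠ 0 := hc0.ne'
  field_simp
  have hci : c ^ (n - k) * c⁻¹ ^ (n - k) = 1 := by rw [← mul_pow, mul_inv_cancel₀ hcne, one_pow]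
  linear_combination (-(poch (x + β) k * poch (-x) (n - k) * c ^ k * t ^ k * t ^ (n - k))) * hci

lemma summable_poch_abs (a r : ℝ) (hr : |r| < 1) :
    Summable (fun m : ℕ => |poch a m| * |r| ^ m / (m.factorial : ℝ)) := by
  have hr0 : (0 : ℝ) ≤ |r| := abs_nonneg r
  have hl1 : (1 + |r|) / 2 < 1 := by linarith
  refine summable_of_ratio_norm_eventually_le hl1 ?_
  rw [Filter.eventually_atTop]
  refine ⟨⌈2 * |a| / (1 - |r|)⌉₊, fun m hm => ?_⟩
  have h2 : (0 : ℝ) < 1 - |r| := by linarith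
  have hmr : 2 * |a| ≤ (m : ℝ) * (1 - |r|) := by
    have h1 : 2 * |a| / (1 - |r|) ≤ (m : ℝ) := le_trans (Nat.le_ceil _) (by exact_mod_cast hm)
    calc 2 * |a| = 2 * |a| / (1 - |r|) * (1 - |r|) := by field_simp
      _ ≤ (m : ℝ) * (1 - |r|) := mul_le_mul_of_nonneg_right h1 h2.le
  have key : |a + (m : ℝ)| * |r| ≤ (1 + |r|) / 2 * ((m : ℝ) + 1) := by
    have h3 : |a + (m : ℝ)| ≤ |a| + (m : ℝ) := by
      calc |a + (m : ℝ)| ≤ |a| + |(m : ℝ)| := abs_add_le _ _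
        _ = |a| + (m : ℝ) := by rw [abs_of_nonneg (by positivity : (0:ℝ) ≤ (m:ℝ))]
    have h4 : |a| * |r| ≤ |a| := mul_le_of_le_one_right (abs_nonneg a) (by linarith)
    nlinarith [abs_nonneg a, (Nat.cast_nonneg m : (0:ℝ) ≤ (m:ℝ)), mul_le_mul_of_nonneg_right h3 hr0]
  have hf : ∀ k : ℕ, ‖|poch a k| * |r| ^ k / (k.factorial : ℝ)‖
      = |poch a k| * |r| ^ k / (k.factorial : ℝ) := by
    intro k
    rw [Real.norm_eq_abs, abs_of_nonneg]
    positivity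
  rw [hf, hf]
  have hA : (0 : ℝ) ≤ |poch a m| * |r| ^ m / (m.factorial : ℝ) := by positivity
  have hstep : |a + (m : ℝ)| * |r| / ((m : ℝ) + 1) ≤ (1 + |r|) / 2 := by
    rw [div_le_iff₀ (by positivity)]
    linarith [key]
  calc |poch a (m + 1)| * |r| ^ (m + 1) / ((m + 1).factorial : ℝ)
      = (|poch a m| * |r| ^ m / (m.factorial : ℝ)) * (|a + (m : ℝ)| * |r| / ((m : ℝ) + 1)) := by
        have hfs : (((m + 1).factorial : ℕ) : ℝ) = ((m : ℝ) + 1) * (m.factorial : ℝ) := by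
          rw [Nat.factorial_succ]; push_cast; ring
        rw [poch_succ, abs_mul, pow_succ, hfs]
        have hfne : (m.factorial : ℝ) ≠ 0 := by exact_mod_cast m.factorial_ne_zero
        have hm1 : ((m : ℝ) + 1) ≠ 0 := by positivity
        field_simp
    _ ≤ (|poch a m| * |r| ^ m / (m.factorial : ℝ)) * ((1 + |r|) / 2) :=
        mul_le_mul_of_nonneg_left hstep hA
    _ = (1 + |r|) / 2 * (|poch a m| * |r| ^ m / (m.factorial : ℝ)) := by ring

lemma poch_le_poch_succ_base {γ : ℝ} (hγ : 0 < γ) (n : ℕ) : poch γ n ≤ poch (γ + 1) n := by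
  apply Finset.prod_le_prod
  · intro i _; positivity
  · intro i _; linarith


set_option maxHeartbeats 1000000 in
/-- Generating function with modified coefficients for the Meixner polynomials, equal
to the Appell function \(F_1[\gamma; x+\beta, -x; \gamma+1; ct, t]\); both sides
converge absolutely. -/
theorem meixner_modified_generating_function (β c γ x t : ℝ)
    (hβ : 0 < β) (hc0 : 0 < c) (hc1 : c < 1) (hγ : 0 < γ) (ht : |t| < min 1 (1 / c)) :
    Summable (fun p : ℕ × ℕ =>
      |poch γ (p.1 + p.2) * poch (x + β) p.1 * poch (-x) p.2 /
        (poch (γ + 1) (p.1 + p.2) * (Nat.factorial p.1) * (Nat.factorial p.2)) *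
        (c * t) ^ p.1 * t ^ p.2|) ∧
    HasSum (fun n : ℕ => γ / ((n : ℝ) + γ) * meixner β c x n * (c * t) ^ n / (Nat.factorial n))
      (∑' p : ℕ × ℕ,
        poch γ (p.1 + p.2) * poch (x + β) p.1 * poch (-x) p.2 /
          (poch (γ + 1) (p.1 + p.2) * (Nat.factorial p.1) * (Nat.factorial p.2)) *
          (c * t) ^ p.1 * t ^ p.2) := by
  obtain ⟨ht1, ht2⟩ := lt_min_iff.mp ht
  have hγ1 : (0 : ℝ) < γ + 1 := by linarith
  have hct : |c * t| < 1 := by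
    rw [abs_mul, abs_of_pos hc0]
    calc c * |t| < c * (1 / c) := mul_lt_mul_of_pos_left ht2 hc0
      _ = 1 := by field_simp
  set f : ℕ × ℕ → ℝ := fun p =>
    poch γ (p.1 + p.2) * poch (x + β) p.1 * poch (-x) p.2 /
      (poch (γ + 1) (p.1 + p.2) * (Nat.factorial p.1) * (Nat.factorial p.2)) *
      (c * t) ^ p.1 * t ^ p.2 with hfdef
  have hg1 : Summable (fun m : ℕ => |poch (x + β) m| * |c * t| ^ m / (m.factorial : ℝ)) :=
    summable_poch_abs (x + β) (c * t) hct
  have hg2 : Summable (fun j : ℕ => |poch (-x) j| * |t| ^ j / (j.factorial : ℝ)) :=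
    summable_poch_abs (-x) t ht1
  have hbound : ∀ p : ℕ × ℕ, |f p| ≤
      (|poch (x + β) p.1| * |c * t| ^ p.1 / (p.1.factorial : ℝ)) *
        (|poch (-x) p.2| * |t| ^ p.2 / (p.2.factorial : ℝ)) := by
    rintro ⟨m, j⟩
    have hsplit : f (m, j) = (poch γ (m + j) / poch (γ + 1) (m + j)) *
        (poch (x + β) m * (c * t) ^ m / (m.factorial : ℝ)) *
        (poch (-x) j * t ^ j / (j.factorial : ℝ)) := by
      simp only [hfdef]
      ring
    rw [hsplit, abs_mul, abs_mul]
    have hmf : (0 : ℝ) < (m.factorial : ℝ) := by exact_mod_cast m.factorial_pos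
    have hjf : (0 : ℝ) < (j.factorial : ℝ) := by exact_mod_cast j.factorial_pos
    have hr1 : |poch γ (m + j) / poch (γ + 1) (m + j)| ≤ 1 := by
      rw [abs_div, abs_of_pos (poch_pos hγ _), abs_of_pos (poch_pos hγ1 _),
        div_le_one (poch_pos hγ1 _)]
      exact poch_le_poch_succ_base hγ _
    have e1 : |poch (x + β) m * (c * t) ^ m / (m.factorial : ℝ)|
        = |poch (x + β) m| * |c * t| ^ m / (m.factorial : ℝ) := by
      rw [abs_div, abs_mul, abs_pow, abs_of_pos hmf]
    have e2 : |poch (-x) j * t ^ j / (j.factorial : ℝ)|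
        = |poch (-x) j| * |t| ^ j / (j.factorial : ℝ) := by
      rw [abs_div, abs_mul, abs_pow, abs_of_pos hjf]
    rw [e1, e2]
    have hnn : (0 : ℝ) ≤ (|poch (x + β) m| * |c * t| ^ m / (m.factorial : ℝ)) *
        (|poch (-x) j| * |t| ^ j / (j.factorial : ℝ)) := by positivity
    calc |poch γ (m + j) / poch (γ + 1) (m + j)| *
          (|poch (x + β) m| * |c * t| ^ m / (m.factorial : ℝ)) *
          (|poch (-x) j| * |t| ^ j / (j.factorial : ℝ))
        = |poch γ (m + j) / poch (γ + 1) (m + j)| *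
          ((|poch (x + β) m| * |c * t| ^ m / (m.factorial : ℝ)) *
            (|poch (-x) j| * |t| ^ j / (j.factorial : ℝ))) := by ring
      _ ≤ 1 * ((|poch (x + β) m| * |c * t| ^ m / (m.factorial : ℝ)) *
            (|poch (-x) j| * |t| ^ j / (j.factorial : ℝ))) :=
          mul_le_mul_of_nonneg_right hr1 hnn
      _ = _ := one_mul _
  have hP : Summable (fun p : ℕ × ℕ =>
      (|poch (x + β) p.1| * |c * t| ^ p.1 / (p.1.factorial : ℝ)) *
        (|poch (-x) p.2| * |t| ^ p.2 / (p.2.factorial : ℝ))) :=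
    hg1.mul_of_nonneg hg2 (fun m => by positivity) (fun j => by positivity)
  have h1 : Summable (fun p : ℕ × ℕ => |f p|) :=
    Summable.of_nonneg_of_le (fun p => abs_nonneg _) hbound hP
  refine ⟨h1, ?_⟩
  have hsf : Summable f := summable_abs_iff.mp h1
  have hhs : HasSum f (∑' p : ℕ × ℕ, f p) := hsf.hasSum
  have hcomp : HasSum (fun q : (Σ n : ℕ, Finset.HasAntidiagonal.antidiagonal n) => f q.2)
      (∑' p : ℕ × ℕ, f p) :=
    (Equiv.hasSum_iff Finset.HasAntidiagonal.sigmaAntidiagonalEquivProd).mpr hhs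
  have hfiber : ∀ n : ℕ, HasSum (fun p : Finset.HasAntidiagonal.antidiagonal n => f p)
      (γ / ((n : ℝ) + γ) * meixner β c x n * (c * t) ^ n / (Nat.factorial n)) := by
    intro n
    have h := hasSum_fintype (fun p : Finset.HasAntidiagonal.antidiagonal n => f p)
    rwa [Finset.sum_coe_sort, diag_eq β c γ x t hβ hc0 hγ n] at h
  exact HasSum.sigma hcomp hfiber
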